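/- Let L, K ∈ ℕ with L + K ≥ 1, let a_1,…,a_L and c_1,…,c_K be nonzero reals, and let μ_1,…,μ_L and ν_1,…,ν_K be nonzero reals such that |μ_{l₁}| ≠ |μ_{l₂}| for all l₁ ≠ l₂ and |ν_{k₁}| ≠ |ν_{k₂}| for all k₁ ≠ k₂. Define σ : ℝ → ℝ by σ(t) = Σ_{l=1}^L a_l·cos(μ_l t) + Σ_{k=1}^K c_k·sin(ν_k t). Then there exist constants α, T > 0 such that for all t ∈ ℝ: ∫_t^{t+T} σ(τ)² dτ ≥ α. -/

import Mathlib

open MeasureTheory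

open intervalIntegral in
private lemma pe_int_cos (ω a b : ℝ) (h : ω ≠ 0) :
    ∫ τ in a..b, Real.cos (ω*τ) = (Real.sin (ω*b) - Real.sin (ω*a))/ω := by
  have := integral_comp_mul_left (fun x => Real.cos x) (a:=a) (b:=b) h
  simp at this
  rw [this]; ring

open intervalIntegral in
private lemma pe_int_sin (ω a b : ℝ) (h : ω ≠ 0) :
    ∫ τ in a..b, Real.sin (ω*τ) = (Real.cos (ω*a) - Real.cos (ω*b))/ω := by
  have := integral_comp_mul_left (fun x => Real.sin x) (a:=a) (b:=b) h
  simp at this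
  rw [this]; ring

private lemma pe_abs_int_cos (ω a b : ℝ) (h : ω ≠ 0) : |∫ τ in a..b, Real.cos (ω*τ)| ≤ 2/|ω| := by
  rw [pe_int_cos ω a b h, abs_div]
  gcongr
  calc |Real.sin (ω*b) - Real.sin (ω*a)| ≤ |Real.sin (ω*b)| + |Real.sin (ω*a)| := abs_sub _ _
    _ ≤ 1 + 1 := by gcongr <;> [exact Real.abs_sin_le_one _; exact Real.abs_sin_le_one _]
    _ = 2 := by norm_num

private lemma pe_abs_int_sin (ω a b : ℝ) : |∫ τ in a..b, Real.sin (ω*τ)| ≤ 2/|ω| := by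
  rcases eq_or_ne ω 0 with rfl|h
  · simp
  rw [pe_int_sin ω a b h, abs_div]
  gcongr
  calc |Real.cos (ω*a) - Real.cos (ω*b)| ≤ |Real.cos (ω*a)| + |Real.cos (ω*b)| := abs_sub _ _
    _ ≤ 1 + 1 := by gcongr <;> [exact Real.abs_cos_le_one _; exact Real.abs_cos_le_one _]
    _ = 2 := by norm_num

private lemma pe_key_pt {L K : ℕ} (a : Fin L → ℝ) (c : Fin K → ℝ) (μ : Fin L → ℝ) (ν : Fin K → ℝ) (τ : ℝ) :
    ((∑ l : Fin L, a l * Real.cos (μ l * τ)) + ∑ k : Fin K, c k * Real.sin (ν k * τ)) ^ 2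
    = (∑ p : Fin L × Fin L, (a p.1 * a p.2 / 2) * (Real.cos ((μ p.1 - μ p.2)*τ) + Real.cos ((μ p.1 + μ p.2)*τ)))
    + (∑ p : Fin L × Fin K, (a p.1 * c p.2) * (Real.sin ((μ p.1 + ν p.2)*τ) - Real.sin ((μ p.1 - ν p.2)*τ)))
    + (∑ p : Fin K × Fin K, (c p.1 * c p.2 / 2) * (Real.cos ((ν p.1 - ν p.2)*τ) - Real.cos ((ν p.1 + ν p.2)*τ))) := by
  have cc : ∀ x y : ℝ, Real.cos x * Real.cos y = (Real.cos (x-y) + Real.cos (x+y))/2 := by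
    intro x y; rw [Real.cos_sub, Real.cos_add]; ring
  have cs : ∀ x y : ℝ, Real.cos x * Real.sin y = (Real.sin (x+y) - Real.sin (x-y))/2 := by
    intro x y; rw [Real.sin_add, Real.sin_sub]; ring
  have ss : ∀ x y : ℝ, Real.sin x * Real.sin y = (Real.cos (x-y) - Real.cos (x+y))/2 := by
    intro x y; rw [Real.cos_sub, Real.cos_add]; ring
  rw [add_sq]
  congr 1
  · congr 1
    · rw [sq, Finset.sum_mul_sum, ← Finset.sum_product', Finset.univ_product_univ]
      apply Finset.sum_congr rfl
      intro p _
      rw [sub_mul, add_mul, mul_mul_mul_comm, cc]; ring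
    · rw [mul_assoc, Finset.sum_mul_sum, ← Finset.sum_product', Finset.univ_product_univ, Finset.mul_sum]
      apply Finset.sum_congr rfl
      intro p _
      rw [add_mul, sub_mul, mul_mul_mul_comm, cs]; ring
  · rw [sq, Finset.sum_mul_sum, ← Finset.sum_product', Finset.univ_product_univ]
    apply Finset.sum_congr rfl
    intro p _
    rw [sub_mul, add_mul, mul_mul_mul_comm, ss]; ring

open intervalIntegral in
private lemma pe_key_int {L K : ℕ} (a : Fin L → ℝ) (c : Fin K → ℝ) (μ : Fin L → ℝ) (ν : Fin K → ℝ)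
    (t b : ℝ) :
    (∫ τ in t..b, ((∑ l : Fin L, a l * Real.cos (μ l * τ)) + ∑ k : Fin K, c k * Real.sin (ν k * τ)) ^ 2)
    = (∑ p : Fin L × Fin L, (a p.1 * a p.2 / 2) * ((∫ τ in t..b, Real.cos ((μ p.1 - μ p.2)*τ)) + ∫ τ in t..b, Real.cos ((μ p.1 + μ p.2)*τ)))
    + (∑ p : Fin L × Fin K, (a p.1 * c p.2) * ((∫ τ in t..b, Real.sin ((μ p.1 + ν p.2)*τ)) - ∫ τ in t..b, Real.sin ((μ p.1 - ν p.2)*τ)))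
    + (∑ p : Fin K × Fin K, (c p.1 * c p.2 / 2) * ((∫ τ in t..b, Real.cos ((ν p.1 - ν p.2)*τ)) - ∫ τ in t..b, Real.cos ((ν p.1 + ν p.2)*τ))) := by
  have iic : ∀ ω : ℝ, IntervalIntegrable (fun τ => Real.cos (ω*τ)) MeasureTheory.volume t b := by
    intro ω; apply Continuous.intervalIntegrable; fun_prop
  have iis : ∀ ω : ℝ, IntervalIntegrable (fun τ => Real.sin (ω*τ)) MeasureTheory.volume t b := by
    intro ω; apply Continuous.intervalIntegrable; fun_prop
  have i1 : IntervalIntegrable (fun τ => ∑ p : Fin L × Fin L, (a p.1 * a p.2 / 2) * (Real.cos ((μ p.1 - μ p.2)*τ) + Real.cos ((μ p.1 + μ p.2)*τ))) MeasureTheory.volume t b := by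
    apply Continuous.intervalIntegrable; apply continuous_finset_sum; intro p _; fun_prop
  have i2 : IntervalIntegrable (fun τ => ∑ p : Fin L × Fin K, (a p.1 * c p.2) * (Real.sin ((μ p.1 + ν p.2)*τ) - Real.sin ((μ p.1 - ν p.2)*τ))) MeasureTheory.volume t b := by
    apply Continuous.intervalIntegrable; apply continuous_finset_sum; intro p _; fun_prop
  have i3 : IntervalIntegrable (fun τ => ∑ p : Fin K × Fin K, (c p.1 * c p.2 / 2) * (Real.cos ((ν p.1 - ν p.2)*τ) - Real.cos ((ν p.1 + ν p.2)*τ))) MeasureTheory.volume t b := by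
    apply Continuous.intervalIntegrable; apply continuous_finset_sum; intro p _; fun_prop
  rw [integral_congr (g := fun τ =>
      (∑ p : Fin L × Fin L, (a p.1 * a p.2 / 2) * (Real.cos ((μ p.1 - μ p.2)*τ) + Real.cos ((μ p.1 + μ p.2)*τ)))
    + (∑ p : Fin L × Fin K, (a p.1 * c p.2) * (Real.sin ((μ p.1 + ν p.2)*τ) - Real.sin ((μ p.1 - ν p.2)*τ)))
    + (∑ p : Fin K × Fin K, (c p.1 * c p.2 / 2) * (Real.cos ((ν p.1 - ν p.2)*τ) - Real.cos ((ν p.1 + ν p.2)*τ))))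
    (fun τ _ => pe_key_pt a c μ ν τ)]
  rw [integral_add (i1.add i2) i3, integral_add i1 i2]
  rw [intervalIntegral.integral_finset_sum (fun p _ => by apply Continuous.intervalIntegrable; fun_prop),
      intervalIntegral.integral_finset_sum (fun p _ => by apply Continuous.intervalIntegrable; fun_prop),
      intervalIntegral.integral_finset_sum (fun p _ => by apply Continuous.intervalIntegrable; fun_prop)]
  congr 1
  · congr 1
    · apply Finset.sum_congr rfl; intro p _
      rw [intervalIntegral.integral_const_mul, integral_add (iic _) (iic _)]
    · apply Finset.sum_congr rfl; intro p _
      rw [intervalIntegral.integral_const_mul, integral_sub (iis _) (iis _)]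
  · apply Finset.sum_congr rfl; intro p _
    rw [intervalIntegral.integral_const_mul, integral_sub (iic _) (iic _)]

/-- scalar persistent excitation underlying Proposition 1: a nontrivial
finite sum of sinusoids with nonzero frequencies, pairwise distinct in absolute value
within each trigonometric family, has uniformly positive energy over windows of fixed
length. -/
theorem stmt_3 (L K : ℕ) (hLK : 1 ≤ L + K)
    (a : Fin L → ℝ) (c : Fin K → ℝ) (ha : ∀ l, a l ≠ 0) (hc : ∀ k, c k ≠ 0)
    (μ : Fin L → ℝ) (ν : Fin K → ℝ) (hμ0 : ∀ l, μ l ≠ 0) (hν0 : ∀ k, ν k ≠ 0)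
    (hμ : ∀ l₁ l₂ : Fin L, l₁ ≠ l₂ → |μ l₁| ≠ |μ l₂|)
    (hν : ∀ k₁ k₂ : Fin K, k₁ ≠ k₂ → |ν k₁| ≠ |ν k₂|) :
    ∃ α T : ℝ, 0 < α ∧ 0 < T ∧ ∀ t : ℝ,
      α ≤ ∫ τ in t..(t + T),
            ((∑ l : Fin L, a l * Real.cos (μ l * τ))
              + ∑ k : Fin K, c k * Real.sin (ν k * τ)) ^ 2 := by
  -- the total energy
  set S : ℝ := (∑ l : Fin L, (a l)^2) + ∑ k : Fin K, (c k)^2 with hSdef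
  have hS : 0 < S := by
    have h1 : 0 ≤ ∑ l : Fin L, (a l)^2 := Finset.sum_nonneg fun _ _ => sq_nonneg _
    have h2 : 0 ≤ ∑ k : Fin K, (c k)^2 := Finset.sum_nonneg fun _ _ => sq_nonneg _
    obtain hL | hK : 0 < L ∨ 0 < K := by omega
    · have : 0 < ∑ l : Fin L, (a l)^2 :=
        Finset.sum_pos' (fun _ _ => sq_nonneg _)
          ⟨⟨0, hL⟩, Finset.mem_univ _, by have := ha ⟨0, hL⟩; positivity⟩
      linarith
    · have : 0 < ∑ k : Fin K, (c k)^2 :=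
        Finset.sum_pos' (fun _ _ => sq_nonneg _)
          ⟨⟨0, hK⟩, Finset.mem_univ _, by have := hc ⟨0, hK⟩; positivity⟩
      linarith
  -- the error constant
  set C : ℝ :=
      (∑ p : Fin L × Fin L, |a p.1 * a p.2| / 2 * (2/|μ p.1 - μ p.2| + 2/|μ p.1 + μ p.2|))
    + (∑ p : Fin L × Fin K, |a p.1 * c p.2| * (2/|μ p.1 + ν p.2| + 2/|μ p.1 - ν p.2|))
    + (∑ p : Fin K × Fin K, |c p.1 * c p.2| / 2 * (2/|ν p.1 - ν p.2| + 2/|ν p.1 + ν p.2|)) with hCdef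
  have hC : 0 ≤ C := by positivity
  refine ⟨1, (2*C+2)/S, one_pos, by positivity, ?_⟩
  intro t
  set T : ℝ := (2*C+2)/S with hTdef
  rw [pe_key_int a c μ ν t (t+T)]
  -- frequency non-vanishing facts
  have hμsub : ∀ p : Fin L × Fin L, p.1 ≠ p.2 → μ p.1 - μ p.2 ≠ 0 := by
    intro p hp h
    exact hμ _ _ hp (by rw [sub_eq_zero.mp h])
  have hμadd : ∀ p : Fin L × Fin L, μ p.1 + μ p.2 ≠ 0 := by
    intro p h
    rcases eq_or_ne p.1 p.2 with he | he
    · exact hμ0 p.2 (by rw [he] at h; linarith)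
    · exact hμ _ _ he (by rw [show μ p.1 = -μ p.2 by linarith, abs_neg])
  have hνsub : ∀ p : Fin K × Fin K, p.1 ≠ p.2 → ν p.1 - ν p.2 ≠ 0 := by
    intro p hp h
    exact hν _ _ hp (by rw [sub_eq_zero.mp h])
  have hνadd : ∀ p : Fin K × Fin K, ν p.1 + ν p.2 ≠ 0 := by
    intro p h
    rcases eq_or_ne p.1 p.2 with he | he
    · exact hν0 p.2 (by rw [he] at h; linarith)
    · exact hν _ _ he (by rw [show ν p.1 = -ν p.2 by linarith, abs_neg])
  -- diagonal-corrected integrals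
  have hDμ : ∀ p : Fin L × Fin L,
      |(∫ τ in t..t+T, Real.cos ((μ p.1 - μ p.2)*τ)) - (if p.1 = p.2 then T else 0)|
        ≤ 2/|μ p.1 - μ p.2| := by
    intro p
    rcases eq_or_ne p.1 p.2 with he | he
    · rw [if_pos he, he, sub_self]
      simp
    · rw [if_neg he, sub_zero]
      exact pe_abs_int_cos _ _ _ (hμsub p he)
  have hDν : ∀ p : Fin K × Fin K,
      |(∫ τ in t..t+T, Real.cos ((ν p.1 - ν p.2)*τ)) - (if p.1 = p.2 then T else 0)|
        ≤ 2/|ν p.1 - ν p.2| := by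
    intro p
    rcases eq_or_ne p.1 p.2 with he | he
    · rw [if_pos he, he, sub_self]
      simp
    · rw [if_neg he, sub_zero]
      exact pe_abs_int_cos _ _ _ (hνsub p he)
  -- split off the diagonal contribution
  have e1 : (∑ p : Fin L × Fin L, (a p.1 * a p.2 / 2) *
        ((∫ τ in t..t+T, Real.cos ((μ p.1 - μ p.2)*τ)) + ∫ τ in t..t+T, Real.cos ((μ p.1 + μ p.2)*τ)))
      = (∑ p : Fin L × Fin L, (a p.1 * a p.2 / 2) *
        (((∫ τ in t..t+T, Real.cos ((μ p.1 - μ p.2)*τ)) - (if p.1 = p.2 then T else 0))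
          + ∫ τ in t..t+T, Real.cos ((μ p.1 + μ p.2)*τ)))
        + T * (∑ l : Fin L, (a l)^2) / 2 := by
    rw [Finset.sum_congr rfl (fun p _ => show (a p.1 * a p.2 / 2) *
        ((∫ τ in t..t+T, Real.cos ((μ p.1 - μ p.2)*τ)) + ∫ τ in t..t+T, Real.cos ((μ p.1 + μ p.2)*τ))
      = (a p.1 * a p.2 / 2) *
        (((∫ τ in t..t+T, Real.cos ((μ p.1 - μ p.2)*τ)) - (if p.1 = p.2 then T else 0))
          + ∫ τ in t..t+T, Real.cos ((μ p.1 + μ p.2)*τ))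
        + (a p.1 * a p.2 / 2) * (if p.1 = p.2 then T else 0) from by ring),
      Finset.sum_add_distrib]
    congr 1
    rw [Fintype.sum_prod_type]
    simp only [mul_ite, mul_zero]
    rw [Finset.sum_congr rfl (fun l _ => Finset.sum_ite_eq Finset.univ l
        (fun l' => a l * a l' / 2 * T))]
    simp only [Finset.mem_univ, if_true]
    rw [Finset.mul_sum, Finset.sum_div]
    exact Finset.sum_congr rfl fun l _ => by ring
  have e3 : (∑ p : Fin K × Fin K, (c p.1 * c p.2 / 2) *
        ((∫ τ in t..t+T, Real.cos ((ν p.1 - ν p.2)*τ)) - ∫ τ in t..t+T, Real.cos ((ν p.1 + ν p.2)*τ)))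
      = (∑ p : Fin K × Fin K, (c p.1 * c p.2 / 2) *
        (((∫ τ in t..t+T, Real.cos ((ν p.1 - ν p.2)*τ)) - (if p.1 = p.2 then T else 0))
          - ∫ τ in t..t+T, Real.cos ((ν p.1 + ν p.2)*τ)))
        + T * (∑ k : Fin K, (c k)^2) / 2 := by
    rw [Finset.sum_congr rfl (fun p _ => show (c p.1 * c p.2 / 2) *
        ((∫ τ in t..t+T, Real.cos ((ν p.1 - ν p.2)*τ)) - ∫ τ in t..t+T, Real.cos ((ν p.1 + ν p.2)*τ))
      = (c p.1 * c p.2 / 2) *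
        (((∫ τ in t..t+T, Real.cos ((ν p.1 - ν p.2)*τ)) - (if p.1 = p.2 then T else 0))
          - ∫ τ in t..t+T, Real.cos ((ν p.1 + ν p.2)*τ))
        + (c p.1 * c p.2 / 2) * (if p.1 = p.2 then T else 0) from by ring),
      Finset.sum_add_distrib]
    congr 1
    rw [Fintype.sum_prod_type]
    simp only [mul_ite, mul_zero]
    rw [Finset.sum_congr rfl (fun k _ => Finset.sum_ite_eq Finset.univ k
        (fun k' => c k * c k' / 2 * T))]
    simp only [Finset.mem_univ, if_true]
    rw [Finset.mul_sum, Finset.sum_div]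
    exact Finset.sum_congr rfl fun k _ => by ring
  rw [e1, e3]
  -- bound the remainder terms
  have b1 : |∑ p : Fin L × Fin L, (a p.1 * a p.2 / 2) *
        (((∫ τ in t..t+T, Real.cos ((μ p.1 - μ p.2)*τ)) - (if p.1 = p.2 then T else 0))
          + ∫ τ in t..t+T, Real.cos ((μ p.1 + μ p.2)*τ))|
      ≤ ∑ p : Fin L × Fin L, |a p.1 * a p.2| / 2 * (2/|μ p.1 - μ p.2| + 2/|μ p.1 + μ p.2|) := by
    refine (Finset.abs_sum_le_sum_abs _ _).trans (Finset.sum_le_sum fun p _ => ?_)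
    rw [abs_mul, abs_div, abs_two]
    refine mul_le_mul_of_nonneg_left ?_ (by positivity)
    exact (abs_add_le _ _).trans (add_le_add (hDμ p) (pe_abs_int_cos _ _ _ (hμadd p)))
  have b2 : |∑ p : Fin L × Fin K, (a p.1 * c p.2) *
        ((∫ τ in t..t+T, Real.sin ((μ p.1 + ν p.2)*τ)) - ∫ τ in t..t+T, Real.sin ((μ p.1 - ν p.2)*τ))|
      ≤ ∑ p : Fin L × Fin K, |a p.1 * c p.2| * (2/|μ p.1 + ν p.2| + 2/|μ p.1 - ν p.2|) := by
    refine (Finset.abs_sum_le_sum_abs _ _).trans (Finset.sum_le_sum fun p _ => ?_)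
    rw [abs_mul]
    refine mul_le_mul_of_nonneg_left ?_ (abs_nonneg _)
    exact (abs_sub _ _).trans (add_le_add (pe_abs_int_sin _ _ _) (pe_abs_int_sin _ _ _))
  have b3 : |∑ p : Fin K × Fin K, (c p.1 * c p.2 / 2) *
        (((∫ τ in t..t+T, Real.cos ((ν p.1 - ν p.2)*τ)) - (if p.1 = p.2 then T else 0))
          - ∫ τ in t..t+T, Real.cos ((ν p.1 + ν p.2)*τ))|
      ≤ ∑ p : Fin K × Fin K, |c p.1 * c p.2| / 2 * (2/|ν p.1 - ν p.2| + 2/|ν p.1 + ν p.2|) := by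
    refine (Finset.abs_sum_le_sum_abs _ _).trans (Finset.sum_le_sum fun p _ => ?_)
    rw [abs_mul, abs_div, abs_two]
    refine mul_le_mul_of_nonneg_left ?_ (by positivity)
    exact (abs_sub _ _).trans (add_le_add (hDν p) (pe_abs_int_cos _ _ _ (hνadd p)))
  have hTS : T * S = 2*C + 2 := by
    rw [hTdef]; field_simp
  have habs1 := neg_abs_le (∑ p : Fin L × Fin L, (a p.1 * a p.2 / 2) *
        (((∫ τ in t..t+T, Real.cos ((μ p.1 - μ p.2)*τ)) - (if p.1 = p.2 then T else 0))
          + ∫ τ in t..t+T, Real.cos ((μ p.1 + μ p.2)*τ)))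
  have habs2 := neg_abs_le (∑ p : Fin L × Fin K, (a p.1 * c p.2) *
        ((∫ τ in t..t+T, Real.sin ((μ p.1 + ν p.2)*τ)) - ∫ τ in t..t+T, Real.sin ((μ p.1 - ν p.2)*τ)))
  have habs3 := neg_abs_le (∑ p : Fin K × Fin K, (c p.1 * c p.2 / 2) *
        (((∫ τ in t..t+T, Real.cos ((ν p.1 - ν p.2)*τ)) - (if p.1 = p.2 then T else 0))
          - ∫ τ in t..t+T, Real.cos ((ν p.1 + ν p.2)*τ)))
  have hTS2 : T * (∑ l : Fin L, (a l)^2) / 2 + T * (∑ k : Fin K, (c k)^2) / 2 = C + 1 := by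
    have h := hTS
    rw [hSdef] at h
    linear_combination h / 2
  linarith [b1, b2, b3, habs1, habs2, habs3]
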